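/- Let K be a number field that is not contained in ℝ (i.e. K admits a complex, non-real embedding into ℂ), with ring of integers O_K, and let 𝔞 be a nonempty subset of O_K. Then there exist pairwise disjoint subsets A, B and C of 𝔞 with 𝔞 = A ∪ B ∪ C such that none of A, B, C is fractionally dense in ℂ (with respect to a fixed complex non-real embedding of K into ℂ). -/

import Mathlib

open Real Complex

lemma aux_quot_re (x y : ℂ) (hy : y ≠ 0) (h : |x.arg - y.arg| ≤ 2*π/3) :
    -(‖x/y‖)/2 ≤ (x/y).re := by
  have hx0 : x = (‖x‖ : ℂ) * Complex.exp (x.arg * Complex.I) :=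
    (Complex.norm_mul_exp_arg_mul_I x).symm
  have hy0 : y = (‖y‖ : ℂ) * Complex.exp (y.arg * Complex.I) :=
    (Complex.norm_mul_exp_arg_mul_I y).symm
  have hquot : x / y = ((‖x‖ / ‖y‖ : ℝ) : ℂ) *
      Complex.exp (((x.arg - y.arg : ℝ)) * Complex.I) := by
    rw [Complex.ofReal_div]
    nth_rewrite 1 [hx0, hy0]
    rw [mul_div_mul_comm, ← Complex.exp_sub]
    push_cast
    ring_nf
  have hcos : -(1/2 : ℝ) ≤ Real.cos (x.arg - y.arg) := by
    have h23 : Real.cos (2*π/3) = -(1/2) := by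
      have : (2*π/3) = π - π/3 := by ring
      rw [this, Real.cos_pi_sub, Real.cos_pi_div_three]
    have hmono := Real.cos_le_cos_of_nonneg_of_le_pi (abs_nonneg (x.arg - y.arg))
      (by linarith [Real.pi_pos] : 2*π/3 ≤ π) h
    rw [Real.cos_abs] at hmono
    linarith
  have hre : (x/y).re = (‖x‖ / ‖y‖) * Real.cos (x.arg - y.arg) := by
    rw [hquot, Complex.re_ofReal_mul, Complex.exp_ofReal_mul_I_re]
  have habs : ‖x/y‖ = ‖x‖ / ‖y‖ := norm_div _ _
  have hnn : 0 ≤ ‖x‖ / ‖y‖ :=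
    div_nonneg (norm_nonneg _) (norm_nonneg _)
  rw [hre, habs]
  nlinarith

lemma aux_not_dense (S : Set ℂ) (hS : ∀ z ∈ S, -(‖z‖)/2 ≤ z.re) : ¬ Dense S := by
  intro h
  obtain ⟨z, hzS, hz⟩ := h.exists_dist_lt (-1 : ℂ) (by norm_num : (0:ℝ) < 1/4)
  have h1 := hS z hzS
  have hd : ‖z + 1‖ < 1/4 := by
    have : dist (-1 : ℂ) z = ‖z + 1‖ := by
      rw [Complex.dist_eq]
      rw [show (-1 : ℂ) - z = -(z+1) by ring, norm_neg]
    rwa [this] at hz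
  have hre : z.re ≤ -3/4 := by
    have h2 : |(z+1).re| ≤ ‖z+1‖ := Complex.abs_re_le_norm _
    have h3 : (z+1).re = z.re + 1 := by simp
    rw [h3] at h2
    have := abs_le.mp (le_of_lt (lt_of_le_of_lt h2 hd))
    linarith [this.2]
  have habs : ‖z‖ ≤ 5/4 := by
    calc ‖z‖ = ‖(z+1) + (-1)‖ := by ring_nf
    _ ≤ ‖z+1‖ + ‖(-1 : ℂ)‖ := norm_add_le _ _
    _ ≤ 5/4 := by rw [norm_neg, norm_one]; linarith
  linarith

/-- Theorem 5: for a number field `K` with a non-real complex embedding `σ` and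
a nonempty subset `𝔞` of `𝓞 K`, there is a three-partition `𝔞 = A ∪ B ∪ C`
into pairwise disjoint subsets none of which is fractionally dense in `ℂ`. -/
theorem stmt_13 (K : Type*) [Field K] [NumberField K] (σ : K →+* ℂ)
    (hσ : ∃ x : K, (σ x).im ≠ 0)
    (𝔞 : Set (NumberField.RingOfIntegers K)) (h𝔞 : 𝔞.Nonempty) :
    ∃ A B C : Set (NumberField.RingOfIntegers K),
      A ∪ B ∪ C = 𝔞 ∧ Disjoint A B ∧ Disjoint B C ∧ Disjoint A C ∧
      ¬ Dense {z : ℂ | ∃ x ∈ A, ∃ y ∈ A,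
          σ (algebraMap (NumberField.RingOfIntegers K) K y) ≠ 0 ∧
          z = σ (algebraMap (NumberField.RingOfIntegers K) K x) /
              σ (algebraMap (NumberField.RingOfIntegers K) K y)} ∧
      ¬ Dense {z : ℂ | ∃ x ∈ B, ∃ y ∈ B,
          σ (algebraMap (NumberField.RingOfIntegers K) K y) ≠ 0 ∧
          z = σ (algebraMap (NumberField.RingOfIntegers K) K x) /
              σ (algebraMap (NumberField.RingOfIntegers K) K y)} ∧
      ¬ Dense {z : ℂ | ∃ x ∈ C, ∃ y ∈ C,
          σ (algebraMap (NumberField.RingOfIntegers K) K y) ≠ 0 ∧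
          z = σ (algebraMap (NumberField.RingOfIntegers K) K x) /
              σ (algebraMap (NumberField.RingOfIntegers K) K y)} := by
  set f : NumberField.RingOfIntegers K → ℝ :=
    fun x => (σ (algebraMap (NumberField.RingOfIntegers K) K x)).arg with hf
  refine ⟨{x ∈ 𝔞 | f x < -π/3}, {x ∈ 𝔞 | -π/3 ≤ f x ∧ f x < π/3}, {x ∈ 𝔞 | π/3 ≤ f x},
    ?_, ?_, ?_, ?_, ?_, ?_, ?_⟩
  · ext x
    simp only [Set.mem_union, Set.mem_setOf_eq, Set.mem_sep_iff]
    constructor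
    · rintro ((⟨h,_⟩|⟨h,_⟩)|⟨h,_⟩) <;> exact h
    · intro h
      rcases lt_or_ge (f x) (-π/3) with h1 | h1
      · exact Or.inl (Or.inl ⟨h, h1⟩)
      rcases lt_or_ge (f x) (π/3) with h2 | h2
      · exact Or.inl (Or.inr ⟨h, h1, h2⟩)
      · exact Or.inr ⟨h, h2⟩
  · rw [Set.disjoint_left]; rintro x ⟨_, h1⟩ ⟨_, h2, _⟩; linarith
  · rw [Set.disjoint_left]; rintro x ⟨_, _, h1⟩ ⟨_, h2⟩; linarith
  · rw [Set.disjoint_left]; rintro x ⟨_, h1⟩ ⟨_, h2⟩; linarith [Real.pi_pos]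
  all_goals {
    apply aux_not_dense
    rintro z ⟨x, hx, y, hy, hy0, rfl⟩
    apply aux_quot_re _ _ hy0
    have hax := Complex.neg_pi_lt_arg (σ (algebraMap (NumberField.RingOfIntegers K) K x))
    have hay := Complex.neg_pi_lt_arg (σ (algebraMap (NumberField.RingOfIntegers K) K y))
    have hbx := Complex.arg_le_pi (σ (algebraMap (NumberField.RingOfIntegers K) K x))
    have hby := Complex.arg_le_pi (σ (algebraMap (NumberField.RingOfIntegers K) K y))
    obtain ⟨_, hx2⟩ := hx
    obtain ⟨_, hy2⟩ := hy
    rw [abs_le]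
    constructor <;> simp only [hf] at * <;>
      first
      | (constructor <;> linarith)
      | linarith
      | (rcases hx2 with ⟨h1, h2⟩ <;> rcases hy2 with ⟨h3, h4⟩ <;> linarith)
  }
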